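/- Let $G$ be a countable group and $V$ a finite-dimensional vector space over a field $\mathbb{K}$. Every bijective linear cellular automaton $\tau \colon V^G \to V^G$ is reversible, i.e., $\tau^{-1}$ is also a cellular automaton. -/

import Mathlib

/-- `τ` is a cellular automaton over the group `G` and alphabet `A`:
there are a finite memory set `M ⊆ G` and a local defining map
`μ : A^M → A` with `τ(x)(g) = μ((g⁻¹ · x)|_M)`; note `(g⁻¹ · x)(m) = x (g * m)`. -/
def IsCellularAutomaton {G A : Type*} [Group G] (τ : (G → A) → (G → A)) : Prop :=
  ∃ (M : Finset G) (μ : (M → A) → A),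
    ∀ (x : G → A) (g : G), τ x g = μ (fun m => x (g * m.val))

-- core lemma
theorem ca_core
    {G : Type*} [Group G] [Countable G] {K V : Type*} [Field K]
    [AddCommGroup V] [Module K V] [FiniteDimensional K V]
    (τ : (G → V) → (G → V)) (hlin : IsLinearMap K τ)
    (M : Finset G) (μ : (M → V) → V)
    (hμ : ∀ (x : G → V) (g : G), τ x g = μ (fun m => x (g * m.val)))
    (hinj : Function.Injective τ) :
    ∃ F : Finset G, ∀ y : G → V, (∀ g ∈ F, τ y g = 0) → y 1 = 0 := by
  classical
  obtain ⟨e, he⟩ := exists_surjective_nat G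
  set Fn : ℕ → Finset G := fun n => insert 1 ((Finset.range n).image e) with hFn
  have hmono : ∀ {k l}, k ≤ l → Fn k ⊆ Fn l := by
    intro k l hkl
    exact Finset.insert_subset_insert _
      (Finset.image_subset_image (by simpa using Finset.range_subset_range.2 hkl))
  have hone : ∀ k, (1 : G) ∈ Fn k := fun k => Finset.mem_insert_self _ _
  have hexh : ∀ g : G, ∃ k, g ∈ Fn k := by
    intro g
    obtain ⟨k, rfl⟩ := he g
    exact ⟨k + 1, Finset.mem_insert_of_mem (Finset.mem_image.2 ⟨k, by simp, rfl⟩)⟩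
  have hexhS : ∀ S : Finset G, ∃ k, S ⊆ Fn k := by
    intro S
    refine ⟨S.sup (fun g => (hexh g).choose), fun g hg => ?_⟩
    exact hmono (Finset.le_sup hg) (hexh g).choose_spec
  set L : (G → V) →ₗ[K] (G → V) := hlin.mk' τ with hL
  set A : ℕ → Submodule K (G → V) :=
    fun n => ⨅ g ∈ Fn n, LinearMap.ker ((LinearMap.proj g).comp L) with hA
  have hmemA : ∀ n y, y ∈ A n ↔ ∀ g ∈ Fn n, τ y g = 0 := by
    intro n y
    simp [hA, Submodule.mem_iInf, LinearMap.mem_ker, hL]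
  have hAanti : ∀ {n m}, n ≤ m → A m ≤ A n := by
    intro n m hnm y hy
    rw [hmemA] at hy ⊢
    exact fun g hg => hy g (hmono hnm hg)
  set ρ : ∀ k, (G → V) →ₗ[K] (↥(Fn k) → V) :=
    fun k => LinearMap.pi (fun g => LinearMap.proj g.1) with hρ
  set P : ∀ k, ℕ → Submodule K (↥(Fn k) → V) :=
    fun k n => Submodule.map (ρ k) (A n) with hP
  -- stabilization
  have hstab : ∀ k, ∃ N, ∀ n, N ≤ n → P k n = P k N := by
    intro k
    obtain ⟨N, hN⟩ := IsArtinian.monotone_stabilizes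
      (⟨fun n => OrderDual.toDual (P k n), fun n m hnm =>
        (Submodule.map_mono (hAanti hnm) : P k m ≤ P k n)⟩ :
        ℕ →o (Submodule K (↥(Fn k) → V))ᵒᵈ)
    exact ⟨N, fun n hn => (hN n hn).symm⟩
  choose N hN using hstab
  set B : ∀ k, Submodule K (↥(Fn k) → V) := fun k => P k (N k) with hB
  -- by contradiction
  by_contra hcon
  push_neg at hcon
  have hcon' : ∀ n, ∃ y, y ∈ A n ∧ y 1 ≠ 0 := by
    intro n
    obtain ⟨y, hy1, hy2⟩ := hcon (Fn n)
    exact ⟨y, (hmemA n y).2 hy1, hy2⟩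
  -- restriction maps
  have key : ∀ k l (hkl : k ≤ l) (v : ↥(Fn k) → V), v ∈ B k →
      ∃ w : ↥(Fn l) → V, w ∈ B l ∧ ∀ (g : G) (hgk : g ∈ Fn k),
        w ⟨g, hmono hkl hgk⟩ = v ⟨g, hgk⟩ := by
    intro k l hkl v hv
    set n := max (N k) (N l) with hn
    have hBk : B k = P k n := (hN k n (le_max_left _ _)).symm
    have hBl : B l = P l n := (hN l n (le_max_right _ _)).symm
    have hv' : v ∈ P k n := hBk ▸ hv
    obtain ⟨z, hz, hzv⟩ := Submodule.mem_map.1 hv'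
    refine ⟨ρ l z, hBl ▸ Submodule.mem_map_of_mem hz, ?_⟩
    intro g hgk
    have : (ρ k z) ⟨g, hgk⟩ = v ⟨g, hgk⟩ := by rw [hzv]
    simpa [hρ] using this
  -- base
  obtain ⟨y0, hy0A, hy0⟩ := hcon' (N 0)
  have hb0 : ρ 0 y0 ∈ B 0 := Submodule.mem_map_of_mem hy0A
  -- chain
  have hstep : ∀ k (v : {v : ↥(Fn k) → V // v ∈ B k}),
      ∃ w : {w : ↥(Fn (k+1)) → V // w ∈ B (k+1)},
        ∀ (g : G) (hgk : g ∈ Fn k),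
          w.1 ⟨g, hmono (Nat.le_succ k) hgk⟩ = v.1 ⟨g, hgk⟩ := by
    intro k v
    obtain ⟨w, hw, hw2⟩ := key k (k+1) (Nat.le_succ k) v.1 v.2
    exact ⟨⟨w, hw⟩, hw2⟩
  set b : ∀ k, {v : ↥(Fn k) → V // v ∈ B k} :=
    fun k => Nat.rec ⟨ρ 0 y0, hb0⟩ (fun k ih => (hstep k ih).choose) k with hb
  have hbsucc : ∀ k (g : G) (hgk : g ∈ Fn k),
      (b (k+1)).1 ⟨g, hmono (Nat.le_succ k) hgk⟩ = (b k).1 ⟨g, hgk⟩ := by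
    intro k
    exact (hstep k (b k)).choose_spec
  have hbcompat : ∀ k l (hkl : k ≤ l) (g : G) (hgk : g ∈ Fn k) (hgl : g ∈ Fn l),
      (b l).1 ⟨g, hgl⟩ = (b k).1 ⟨g, hgk⟩ := by
    intro k l hkl
    induction l with
    | zero => intro g hgk hgl; obtain rfl : k = 0 := Nat.le_zero.1 hkl; rfl
    | succ l ih =>
      intro g hgk hgl
      rcases Nat.lt_or_ge k (l+1) with h | h
      · have hkl' : k ≤ l := Nat.lt_succ_iff.1 h
        have hgl' : g ∈ Fn l := hmono hkl' hgk
        rw [← ih hkl' g hgk hgl']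
        exact hbsucc l g hgl'
      · obtain rfl : k = l + 1 := le_antisymm hkl h
        rfl
  -- the limit function
  set y : G → V := fun g => (b (hexh g).choose).1 ⟨g, (hexh g).choose_spec⟩ with hy
  have hyres : ∀ (k : ℕ) (g : G) (hgk : g ∈ Fn k), y g = (b k).1 ⟨g, hgk⟩ := by
    intro k g hgk
    rw [hy]
    dsimp only
    set j := (hexh g).choose with hj
    have hgj : g ∈ Fn j := (hexh g).choose_spec
    have h1 := hbcompat j (max j k) (le_max_left _ _) g hgj (hmono (le_max_left _ _) hgj)
    have h2 := hbcompat k (max j k) (le_max_right _ _) g hgk (hmono (le_max_right _ _) hgk)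
    rw [← h1, h2]
  -- y 1 ≠ 0
  have hy1 : y 1 ≠ 0 := by
    have h1 := hyres 0 1 (hone 0)
    have : (b 0).1 ⟨1, hone 0⟩ = y0 1 := rfl
    rw [h1, this]
    exact hy0
  -- τ y = 0
  have hτy : τ y = 0 := by
    funext g
    obtain ⟨k, hk⟩ := hexhS (insert g (M.image (g * ·)))
    have hgk : g ∈ Fn k := hk (Finset.mem_insert_self _ _)
    set n := max (N k) k with hn
    have hBk : B k = P k n := (hN k n (le_max_left _ _)).symm
    have hbk : (b k).1 ∈ P k n := hBk ▸ (b k).2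
    obtain ⟨z, hz, hzb⟩ := Submodule.mem_map.1 hbk
    have hyz : ∀ m : M, y (g * m.1) = z (g * m.1) := by
      intro m
      have hm : g * m.1 ∈ Fn k :=
        hk (Finset.mem_insert_of_mem (Finset.mem_image.2 ⟨m.1, m.2, rfl⟩))
      have : (ρ k z) ⟨g * m.1, hm⟩ = (b k).1 ⟨g * m.1, hm⟩ := by rw [hzb]
      rw [hyres k (g * m.1) hm, ← this]
      simp [hρ]
    have hτz : τ z g = 0 := by
      have := (hmemA n z).1 hz g (hmono (le_max_right _ _) hgk)
      exact this
    rw [hμ y g]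
    have : (fun m : M => y (g * m.1)) = fun m : M => z (g * m.1) := funext hyz
    rw [this, ← hμ z g, hτz]
    rfl
  have : y = 0 := hinj (by rw [hτy]; exact (map_zero L).symm)
  exact hy1 (by rw [this]; rfl)

theorem bijective_linear_ca_reversible_countable
    {G : Type*} [Group G] [Countable G] {K V : Type*} [Field K]
    [AddCommGroup V] [Module K V] [FiniteDimensional K V]
    (τ : (G → V) → (G → V)) (hlin : IsLinearMap K τ)
    (hca : IsCellularAutomaton τ) (hbij : Function.Bijective τ) :
    ∃ σ : (G → V) → (G → V), Function.LeftInverse σ τ ∧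
      Function.RightInverse σ τ ∧ IsCellularAutomaton σ := by
  classical
  obtain ⟨M, μ, hμ⟩ := hca
  obtain ⟨F, hF⟩ := ca_core τ hlin M μ hμ hbij.1
  set E := Equiv.ofBijective τ hbij with hE
  set ι : (G → V) → (G → V) := ⇑E.symm with hι
  have hτι : ∀ x, τ (ι x) = x := fun x => E.apply_symm_apply x
  have hιτ : ∀ a, ι (τ a) = a := fun a => E.symm_apply_apply a
  set L : (G → V) →ₗ[K] (G → V) := hlin.mk' τ with hL
  have hLτ : ∀ a, L a = τ a := fun a => rfl
  -- key A : local determination of ι at 1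
  have keyA : ∀ x x' : G → V, (∀ g ∈ F, x g = x' g) → ι x 1 = ι x' 1 := by
    intro x x' hxx
    have hsub : τ (ι x - ι x') = x - x' := by
      rw [← hLτ, map_sub, hLτ, hLτ, hτι, hτι]
    have h0 : (ι x - ι x') 1 = 0 := by
      refine hF _ (fun g hg => ?_)
      rw [hsub]
      simp [hxx g hg]
    have := sub_eq_zero.1 (by simpa using h0)
    exact this
  -- key B : equivariance
  have keyB : ∀ (h : G) (x : G → V), τ (fun g => x (h * g)) = fun g => τ x (h * g) := by
    intro h x
    funext g
    rw [hμ, hμ]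
    congr 1
    funext m
    rw [mul_assoc]
  -- key C : ι x g = ι (shifted x) 1
  have keyC : ∀ (x : G → V) (g : G), ι x g = ι (fun g' => x (g * g')) 1 := by
    intro x g
    have h1 : τ (fun g' => ι x (g * g')) = fun g' => x (g * g') := by
      rw [keyB g (ι x), hτι]
    have h2 : ι (fun g' => x (g * g')) = fun g' => ι x (g * g') := by
      rw [← h1, hιτ]
    rw [h2]
    show ι x g = ι x (g * 1)
    rw [mul_one]
  set ext : (↥F → V) → (G → V) := fun v g => if h : g ∈ F then v ⟨g, h⟩ else 0 with hext
  set μ' : (↥F → V) → V := fun v => ι (ext v) 1 with hμ'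
  refine ⟨fun x g => μ' (fun m => x (g * m.val)), ?_, ?_, F, μ', fun x g => rfl⟩
  · intro a
    funext g
    show ι (ext fun m => τ a (g * m.val)) 1 = a g
    have : ι (ext fun m => τ a (g * m.val)) 1 = ι (fun g' => τ a (g * g')) 1 := by
      refine keyA _ _ (fun g' hg' => ?_)
      simp [hext, hg']
    rw [this, ← keyC, hιτ]
  · intro x
    funext g
    show τ (fun g => μ' (fun m => x (g * m.val))) g = x g
    have hσι : (fun g => μ' (fun m => x (g * m.val))) = ι x := by
      funext g
      show ι (ext fun m => x (g * m.val)) 1 = ι x g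
      rw [keyC x g]
      symm
      refine keyA _ _ (fun g' hg' => ?_)
      simp [hext, hg']
    rw [hσι, hτι]
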